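/- arXiv:2204.11106 — 4 statements merged into one kernel-verified Lean document; each statement's English description precedes it below -/
import Mathlib

section
/- Let s ≥ 1 and 0 < τ ≤ 1/2. Let S be a finite set of items, each item j having a weight vector B_j ∈ [0,1]^s, such that the coordinatewise sum of all weight vectors of S is at most (1, 1+τ, ..., 1+τ) (first coordinate at most 1, all others at most 1+τ). Then S can be partitioned into s subsets S_1, ..., S_s such that for each h, the coordinatewise sum of the weight vectors of the items in S_h is at most the all-ones vector. -/
open Finset

/-- A set of items with weight vectors in `[0,1]^s` whose total weight is at most
`(1, 1+τ, …, 1+τ)` (with `0 < τ ≤ 1/2`) can be partitioned into `s` subsets, each of total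
weight at most the all-ones vector. -/
theorem stmt_0 {ι : Type*} [DecidableEq ι] (s : ℕ) (hs : 1 ≤ s)
    (τ : ℝ) (hτ0 : 0 < τ) (hτ1 : τ ≤ 1/2)
    (S : Finset ι) (B : ι → Fin s → ℝ)
    (hB0 : ∀ j ∈ S, ∀ i, 0 ≤ B j i) (hB1 : ∀ j ∈ S, ∀ i, B j i ≤ 1)
    (hsum1 : ∀ i : Fin s, (i : ℕ) = 0 → ∑ j ∈ S, B j i ≤ 1)
    (hsum2 : ∀ i : Fin s, (i : ℕ) ≠ 0 → ∑ j ∈ S, B j i ≤ 1 + τ) :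
    ∃ f : ι → Fin s, ∀ h : Fin s, ∀ i : Fin s,
      ∑ j ∈ S.filter (fun j => f j = h), B j i ≤ 1 := by
  classical
  have h0 : 0 < s := hs
  set z : Fin s := ⟨0, h0⟩ with hzdef
  -- valid partial matchings between items and nonzero coordinates along big (>1/2) entries
  set Valid : Finset (ι × Fin s) → Prop := fun M =>
    (∀ p ∈ M, p.1 ∈ S ∧ (p.2 : ℕ) ≠ 0 ∧ 1/2 < B p.1 p.2) ∧
    (∀ p ∈ M, ∀ q ∈ M, p.1 = q.1 → p = q) ∧
    (∀ p ∈ M, ∀ q ∈ M, p.2 = q.2 → p = q) with hValiddef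
  -- a maximum-cardinality valid matching
  obtain ⟨M, hMval, hMmax⟩ : ∃ M, Valid M ∧ ∀ M', Valid M' → M'.card ≤ M.card := by
    obtain ⟨M, hM1, hM2⟩ := Finset.exists_max_image
      (((S ×ˢ (univ : Finset (Fin s))).powerset).filter Valid) Finset.card
      ⟨∅, mem_filter.2 ⟨mem_powerset.2 (empty_subset _),
        ⟨fun p hp => absurd hp (notMem_empty p),
         fun p hp => absurd hp (notMem_empty p),
         fun p hp => absurd hp (notMem_empty p)⟩⟩⟩
    refine ⟨M, (mem_filter.1 hM1).2, fun M' hM' => hM2 M' ?_⟩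
    refine mem_filter.2 ⟨mem_powerset.2 fun p hp => ?_, hM'⟩
    exact mem_product.2 ⟨(hM'.1 p hp).1, mem_univ _⟩
  set Xm : Finset ι := M.image Prod.fst with hXmdef
  set Im : Finset (Fin s) := M.image Prod.snd with hImdef
  set R : Finset ι := S \ Xm with hRdef
  have hXm_mem : ∀ x : ι, x ∈ Xm ↔ ∃ i, (x, i) ∈ M := by
    intro x
    constructor
    · intro hx
      obtain ⟨⟨a, b⟩, hp, hpx⟩ := mem_image.1 hx
      subst hpx
      exact ⟨b, hp⟩
    · rintro ⟨i, hi⟩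
      exact mem_image.2 ⟨(x, i), hi, rfl⟩
  have hzIm : z ∉ Im := by
    intro hmem
    obtain ⟨p, hp, hp2⟩ := mem_image.1 hmem
    exact (hMval.1 p hp).2.1 (by rw [hp2])
  -- maximality: unmatched items are ≤ 1/2 at unmatched nonzero coordinates
  have hsmall : ∀ x ∈ S, x ∉ Xm → ∀ i : Fin s, (i : ℕ) ≠ 0 → i ∉ Im → B x i ≤ 1/2 := by
    intro x hxS hxXm i hi hiIm
    by_contra hlt
    push_neg at hlt
    have hpair : (x, i) ∉ M := fun hmem => hxXm ((hXm_mem x).2 ⟨i, hmem⟩)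
    have hval' : Valid (insert (x, i) M) := by
      refine ⟨?_, ?_, ?_⟩
      · intro p hp
        rcases mem_insert.1 hp with rfl | hp'
        · exact ⟨hxS, hi, hlt⟩
        · exact hMval.1 p hp'
      · intro p hp q hq hpq
        rcases mem_insert.1 hp with rfl | hp' <;> rcases mem_insert.1 hq with rfl | hq'
        · rfl
        · exact absurd (mem_image.2 ⟨q, hq', hpq.symm⟩) hxXm
        · exact absurd (mem_image.2 ⟨p, hp', hpq⟩) hxXm
        · exact hMval.2.1 p hp' q hq' hpq
      · intro p hp q hq hpq
        rcases mem_insert.1 hp with rfl | hp' <;> rcases mem_insert.1 hq with rfl | hq'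
        · rfl
        · exact absurd (mem_image.2 ⟨q, hq', hpq.symm⟩) hiIm
        · exact absurd (mem_image.2 ⟨p, hp', hpq⟩) hiIm
        · exact hMval.2.2 p hp' q hq' hpq
    have hle := hMmax _ hval'
    rw [card_insert_of_notMem hpair] at hle
    omega
  -- Phase 2: greedy packing of unmatched items into unmatched bins
  have claim2 : ∀ R' : Finset ι, R' ⊆ R → ∃ g : ι → Fin s,
      (∀ x ∈ R', g x ∉ Im) ∧
      (∀ v : Fin s, v ∉ Im → ∀ i : Fin s, (i : ℕ) ≠ 0 → i ∉ Im →
        ∑ y ∈ R'.filter (fun y => g y = v), B y i ≤ 1) := by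
    intro R'
    induction R' using Finset.induction_on with
    | empty =>
      intro _
      refine ⟨fun _ => z, fun x hx => absurd hx (notMem_empty x), ?_⟩
      intro v _ i _ _
      simp
    | @insert x R'' hx ih =>
      intro hsub
      have hR''sub : R'' ⊆ R := (subset_insert x R'').trans hsub
      have hxR : x ∈ R := hsub (mem_insert_self x R'')
      have hxS : x ∈ S := (mem_sdiff.1 hxR).1
      have hxXm : x ∉ Xm := (mem_sdiff.1 hxR).2
      obtain ⟨g, hg1, hg2⟩ := ih hR''sub
      have key : ∃ v : Fin s, v ∉ Im ∧ ∀ i : Fin s, (i : ℕ) ≠ 0 → i ∉ Im →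
          (∑ y ∈ R''.filter (fun y => g y = v), B y i) + B x i ≤ 1 := by
        by_contra hcon
        push_neg at hcon
        set V : Finset (Fin s) := univ \ Im with hVdef
        have hzV : z ∈ V := mem_sdiff.2 ⟨mem_univ _, hzIm⟩
        set C : Finset (Fin s) := V.erase z with hCdef
        have hcard : C.card < V.card := card_erase_lt_of_mem hzV
        have hφ' : ∀ v ∈ V, ∃ i : Fin s, i ∈ C ∧
            1 < (∑ y ∈ R''.filter (fun y => g y = v), B y i) + B x i := by
          intro v hv
          obtain ⟨i, hi1, hi2, hi3⟩ := hcon v (mem_sdiff.1 hv).2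
          refine ⟨i, mem_erase.2 ⟨fun he => hi1 (by rw [he]), mem_sdiff.2 ⟨mem_univ _, hi2⟩⟩, hi3⟩
        set ψ : Fin s → Fin s := fun v => if hv : v ∈ V then (hφ' v hv).choose else z with hψdef
        have hmaps : ∀ v ∈ V, ψ v ∈ C := by
          intro v hv
          have : ψ v = (hφ' v hv).choose := dif_pos hv
          rw [this]
          exact (hφ' v hv).choose_spec.1
        obtain ⟨v, hvV, v', hv'V, hvv', heq⟩ :=
          Finset.exists_ne_map_eq_of_card_lt_of_maps_to hcard hmaps
        have hψv : ψ v = (hφ' v hvV).choose := dif_pos hvV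
        have hψv' : ψ v' = (hφ' v' hv'V).choose := dif_pos hv'V
        set i₀ : Fin s := ψ v with hi₀def
        have hiC : i₀ ∈ C := hmaps v hvV
        have hi₀ne : i₀ ≠ z := (mem_erase.1 hiC).1
        have hi₀V : i₀ ∈ V := (mem_erase.1 hiC).2
        have hi₀Im : i₀ ∉ Im := (mem_sdiff.1 hi₀V).2
        have hi₀0 : (i₀ : ℕ) ≠ 0 := fun hc => hi₀ne (Fin.ext hc)
        have hgt1 : 1 < (∑ y ∈ R''.filter (fun y => g y = v), B y i₀) + B x i₀ := by
          have h' := (hφ' v hvV).choose_spec.2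
          rwa [← hψv] at h'
        have hgt2 : 1 < (∑ y ∈ R''.filter (fun y => g y = v'), B y i₀) + B x i₀ := by
          have h' := (hφ' v' hv'V).choose_spec.2
          rwa [← hψv', ← heq] at h'
        have hBle : B x i₀ ≤ 1/2 := hsmall x hxS hxXm i₀ hi₀0 hi₀Im
        set A : Finset ι := R''.filter (fun y => g y = v) with hAdef
        set A' : Finset ι := R''.filter (fun y => g y = v') with hA'def
        have hdisj : Disjoint A A' := by
          rw [Finset.disjoint_left]
          intro y hyA hyA'
          exact hvv' (((mem_filter.1 hyA).2).symm.trans (mem_filter.1 hyA').2)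
        have hAS : A ∪ A' ⊆ S := by
          intro y hy
          have hyR'' : y ∈ R'' := by
            rcases mem_union.1 hy with h' | h'
            · exact (mem_filter.1 h').1
            · exact (mem_filter.1 h').1
          exact (mem_sdiff.1 (hR''sub hyR'')).1
        have hxnot : x ∉ A ∪ A' := by
          intro hmem
          rcases mem_union.1 hmem with h' | h'
          · exact hx (mem_filter.1 h').1
          · exact hx (mem_filter.1 h').1
        have hsubS : insert x (A ∪ A') ⊆ S := insert_subset hxS hAS
        have h1 : ∑ y ∈ insert x (A ∪ A'), B y i₀ ≤ ∑ y ∈ S, B y i₀ :=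
          sum_le_sum_of_subset_of_nonneg hsubS (fun y hy _ => hB0 y hy i₀)
        have h2 : ∑ y ∈ insert x (A ∪ A'), B y i₀
            = B x i₀ + ((∑ y ∈ A, B y i₀) + (∑ y ∈ A', B y i₀)) := by
          rw [sum_insert hxnot, sum_union hdisj]
        have h3 : ∑ y ∈ S, B y i₀ ≤ 1 + τ := hsum2 i₀ hi₀0
        rw [h2] at h1
        linarith
      obtain ⟨v, hvIm, hvgood⟩ := key
      refine ⟨Function.update g x v, ?_, ?_⟩
      · intro y hy
        rcases mem_insert.1 hy with rfl | hy'
        · rw [Function.update_self]; exact hvIm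
        · rw [Function.update_of_ne (ne_of_mem_of_not_mem hy' hx)]; exact hg1 y hy'
      · intro u huIm i hi1 hi2
        have hfe : R''.filter (fun y => Function.update g x v y = u)
            = R''.filter (fun y => g y = u) := by
          apply filter_congr
          intro y hy
          rw [Function.update_of_ne (ne_of_mem_of_not_mem hy hx)]
        rw [filter_insert]
        by_cases hvu : v = u
        · rw [if_pos (by rw [Function.update_self]; exact hvu)]
          have hxnot2 : x ∉ R''.filter (fun y => Function.update g x v y = u) :=
            fun hc => hx (mem_filter.1 hc).1
          rw [sum_insert hxnot2, hfe]
          have := hvgood i hi1 hi2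
          rw [hvu] at this
          linarith
        · rw [if_neg (by rw [Function.update_self]; exact hvu)]
          rw [hfe]
          exact hg2 u huIm i hi1 hi2
  obtain ⟨g, hg1, hg2⟩ := claim2 R (Finset.Subset.refl R)
  refine ⟨fun y => if hy : ∃ i', (y, i') ∈ M then hy.choose else g y, ?_⟩
  intro h i
  set f : ι → Fin s := fun y => if hy : ∃ i', (y, i') ∈ M then hy.choose else g y with hfdef
  by_cases hhIm : h ∈ Im
  · -- matched bin: singleton
    obtain ⟨p, hpM, hph⟩ := mem_image.1 hhIm
    have hp1S : p.1 ∈ S := (hMval.1 p hpM).1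
    have hsub : S.filter (fun j => f j = h) ⊆ {p.1} := by
      intro y hy
      obtain ⟨hyS, hyf⟩ := mem_filter.1 hy
      by_cases hym : ∃ i', (y, i') ∈ M
      · have hspec := hym.choose_spec
        have hfy : f y = hym.choose := dif_pos hym
        rw [hfy] at hyf
        rw [hyf] at hspec
        have : (y, h) = p := hMval.2.2 (y, h) hspec p hpM (by rw [hph])
        exact mem_singleton.2 (by rw [← this])
      · have hfy : f y = g y := dif_neg hym
        have hyR : y ∈ R := mem_sdiff.2 ⟨hyS, fun hc => hym ((hXm_mem y).1 hc)⟩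
        have hgy : g y = h := by rw [← hfy]; exact hyf
        exact absurd hhIm (hgy ▸ hg1 y hyR)
    calc ∑ j ∈ S.filter (fun j => f j = h), B j i
        ≤ ∑ j ∈ ({p.1} : Finset ι), B j i := by
          apply sum_le_sum_of_subset_of_nonneg hsub
          intro y hy _
          exact hB0 y (mem_singleton.1 hy ▸ hp1S) i
      _ = B p.1 i := sum_singleton _ _
      _ ≤ 1 := hB1 p.1 hp1S i
  · -- unmatched bin
    have hfe : S.filter (fun j => f j = h) = R.filter (fun j => g j = h) := by
      ext y
      simp only [mem_filter]
      constructor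
      · rintro ⟨hyS, hyf⟩
        by_cases hym : ∃ i', (y, i') ∈ M
        · exfalso
          have hfy : f y = hym.choose := dif_pos hym
          have : f y ∈ Im := mem_image.2 ⟨(y, hym.choose), hym.choose_spec, by rw [hfy]⟩
          exact hhIm (hyf ▸ this)
        · have hfy : f y = g y := dif_neg hym
          exact ⟨mem_sdiff.2 ⟨hyS, fun hc => hym ((hXm_mem y).1 hc)⟩, hfy ▸ hyf⟩
      · rintro ⟨hyR, hyg⟩
        have hym : ¬∃ i', (y, i') ∈ M :=
          fun hc => (mem_sdiff.1 hyR).2 ((hXm_mem y).2 hc)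
        exact ⟨(mem_sdiff.1 hyR).1, (dif_neg hym).trans hyg⟩
    rw [hfe]
    have hRS : R.filter (fun j => g j = h) ⊆ S :=
      fun y hy => (mem_sdiff.1 (mem_filter.1 hy).1).1
    by_cases hi0 : (i : ℕ) = 0
    · calc ∑ j ∈ R.filter (fun j => g j = h), B j i
          ≤ ∑ j ∈ S, B j i :=
            sum_le_sum_of_subset_of_nonneg hRS (fun y hy _ => hB0 y hy i)
        _ ≤ 1 := hsum1 i hi0
    · by_cases hiIm : i ∈ Im
      · obtain ⟨q, hqM, hqi⟩ := mem_image.1 hiIm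
        have hq := hMval.1 q hqM
        have hbig : 1/2 < B q.1 i := by rw [← hqi]; exact hq.2.2
        have hsub2 : R.filter (fun j => g j = h) ⊆ S.erase q.1 := by
          intro y hy
          have hyR : y ∈ R := (mem_filter.1 hy).1
          refine mem_erase.2 ⟨?_, (mem_sdiff.1 hyR).1⟩
          intro hc
          exact (mem_sdiff.1 hyR).2 (hc ▸ mem_image.2 ⟨q, hqM, rfl⟩)
        have herase : ∑ j ∈ S.erase q.1, B j i = (∑ j ∈ S, B j i) - B q.1 i :=
          sum_erase_eq_sub hq.1
        have htot : ∑ j ∈ S, B j i ≤ 1 + τ := hsum2 i hi0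
        calc ∑ j ∈ R.filter (fun j => g j = h), B j i
            ≤ ∑ j ∈ S.erase q.1, B j i := by
              apply sum_le_sum_of_subset_of_nonneg hsub2
              intro y hy _
              exact hB0 y (mem_of_mem_erase hy) i
          _ ≤ 1 := by rw [herase]; linarith
      · exact hg2 h hhIm i hi0 hiIm
end

section
/- Let n ≥ 1, E = 10 · Σ_{i=1}^n 10^i, and Q = 10E. Consider any collection of 5 vectors, each of which is either of the form (10^i, Q − 10^i) for some 1 ≤ i ≤ n, or of the form (E − 10^i − 10^j − 10^k, Q − E + 10^i + 10^j + 10^k) for some 1 ≤ i, j, k ≤ n. Then the sum of the second coordinates of these 5 vectors strictly exceeds 4Q − E. -/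
/-- Any 5 item weight vectors (element-items or set-items) have total second
coordinate strictly exceeding the budget `4Q - E`. -/
theorem stmt_5 (n : ℕ) (hn : 1 ≤ n) (E Q : ℤ)
    (hE : E = 10 * ∑ i ∈ Finset.Icc 1 n, (10 : ℤ)^i) (hQ : Q = 10 * E)
    (v : Fin 5 → ℤ × ℤ)
    (hv : ∀ t, (∃ i ∈ Finset.Icc 1 n, v t = ((10 : ℤ)^i, Q - 10^i)) ∨
      (∃ i ∈ Finset.Icc 1 n, ∃ j ∈ Finset.Icc 1 n, ∃ k ∈ Finset.Icc 1 n,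
        v t = (E - 10^i - 10^j - 10^k, Q - E + 10^i + 10^j + 10^k))) :
    4 * Q - E < ∑ t, (v t).2 := by
  have hEbig : (10:ℤ)^n * 10 ≤ E := by
    rw [hE]
    have : (10:ℤ)^n ≤ ∑ i ∈ Finset.Icc 1 n, (10:ℤ)^i :=
      Finset.single_le_sum (f := fun i => (10:ℤ)^i) (fun i _ => by positivity)
        (Finset.mem_Icc.mpr ⟨hn, le_refl n⟩)
    linarith
  have hbound : ∀ i ∈ Finset.Icc 1 n, (10:ℤ) ≤ 10^i ∧ (10:ℤ)^i ≤ 10^n := by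
    intro i hi
    rw [Finset.mem_Icc] at hi
    constructor
    · calc (10:ℤ) = 10^1 := (pow_one 10).symm
        _ ≤ 10^i := pow_le_pow_right₀ (by norm_num) hi.1
    · exact pow_le_pow_right₀ (by norm_num) hi.2
  have hpn : (0:ℤ) < 10^n := pow_pos (by norm_num) n
  have key : ∀ t, Q - E + 30 ≤ (v t).2 := by
    intro t
    rcases hv t with ⟨i, hi, hvt⟩ | ⟨i, hi, j, hj, k, hk, hvt⟩
    · obtain ⟨h1, h2⟩ := hbound i hi
      rw [hvt]
      simp only
      nlinarith
    · obtain ⟨hi1, _⟩ := hbound i hi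
      obtain ⟨hj1, _⟩ := hbound j hj
      obtain ⟨hk1, _⟩ := hbound k hk
      rw [hvt]
      simp only
      linarith
  have hsum : 5 * (Q - E + 30) ≤ ∑ t, (v t).2 := by
    calc 5 * (Q - E + 30) = ∑ _t : Fin 5, (Q - E + 30) := by
          simp [Finset.sum_const]
      _ ≤ ∑ t, (v t).2 := Finset.sum_le_sum fun t _ => key t
  have hE0 : 0 < E := by nlinarith
  linarith
end

section
/- Let n ≥ 1, E = 10 · Σ_{i=1}^n 10^i, and Q = 10E. Suppose 4 vectors are chosen, each either an element-item vector (10^i, Q − 10^i) with 1 ≤ i ≤ n or a set-item vector (E − 10^a − 10^b − 10^c, Q − E + 10^a + 10^b + 10^c) with 1 ≤ a, b, c ≤ n distinct, and their coordinatewise sum is at most (E, 4Q − E). Then the sum of the first coordinates is exactly E, exactly one of the 4 vectors is a set-item vector, the other three are element-item vectors with indices i, j, k, and the set-item vector has index set exactly {i, j, k}. -/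
lemma key_sorted (a b c x y z : ℕ) (hab : a < b) (hbc : b < c)
    (hxy : x ≤ y) (hyz : y ≤ z)
    (h : 10^a + 10^b + 10^c = 10^x + 10^y + 10^z) : x = a ∧ y = b ∧ z = c := by
  have pa : 0 < (10:ℕ)^a := Nat.pow_pos (n := a) (by norm_num)
  have pb : 0 < (10:ℕ)^b := Nat.pow_pos (n := b) (by norm_num)
  have pc : 0 < (10:ℕ)^c := Nat.pow_pos (n := c) (by norm_num)
  have px : 0 < (10:ℕ)^x := Nat.pow_pos (n := x) (by norm_num)
  have py : 0 < (10:ℕ)^y := Nat.pow_pos (n := y) (by norm_num)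
  have pz : 0 < (10:ℕ)^z := Nat.pow_pos (n := z) (by norm_num)
  have hz : z = c := by
    rcases lt_trichotomy z c with hlt | he | hgt
    · exfalso
      have h1 : (10:ℕ)^x ≤ 10^z := Nat.pow_le_pow_right (by norm_num) (le_trans hxy hyz)
      have h2 : (10:ℕ)^y ≤ 10^z := Nat.pow_le_pow_right (by norm_num) hyz
      have h3 : (10:ℕ)^z * 10 ≤ 10^c := by
        calc (10:ℕ)^z * 10 = 10^(z+1) := by ring
        _ ≤ 10^c := Nat.pow_le_pow_right (by norm_num) (by omega)
      linarith
    · exact he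
    · exfalso
      have h1 : (10:ℕ)^a < 10^c := Nat.pow_lt_pow_right (by norm_num) (by omega)
      have h2 : (10:ℕ)^b < 10^c := Nat.pow_lt_pow_right (by norm_num) (by omega)
      have h3 : (10:ℕ)^c * 10 ≤ 10^z := by
        calc (10:ℕ)^c * 10 = 10^(c+1) := by ring
        _ ≤ 10^z := Nat.pow_le_pow_right (by norm_num) (by omega)
      have h4 : (10:ℕ)^z ≤ 10^x + 10^y + 10^z := by linarith [Nat.pow_pos (n := x) (by norm_num : 0 < 10)]
      linarith
  subst hz
  have h' : 10^a + 10^b = 10^x + 10^y := by omega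
  have hy : y = b := by
    rcases lt_trichotomy y b with hlt | he | hgt
    · exfalso
      have h1 : (10:ℕ)^x ≤ 10^y := Nat.pow_le_pow_right (by norm_num) hxy
      have h3 : (10:ℕ)^y * 10 ≤ 10^b := by
        calc (10:ℕ)^y * 10 = 10^(y+1) := by ring
        _ ≤ 10^b := Nat.pow_le_pow_right (by norm_num) (by omega)
      linarith
    · exact he
    · exfalso
      have h1 : (10:ℕ)^a < 10^b := Nat.pow_lt_pow_right (by norm_num) (by omega)
      have h3 : (10:ℕ)^b * 10 ≤ 10^y := by
        calc (10:ℕ)^b * 10 = 10^(b+1) := by ring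
        _ ≤ 10^y := Nat.pow_le_pow_right (by norm_num) (by omega)
      linarith
  subst hy
  have hx : 10^a = 10^x := by omega
  exact ⟨(Nat.pow_right_injective (by norm_num) hx.symm), rfl, rfl⟩

lemma key3 (a b c x y z : ℕ) (hab : a ≠ b) (hac : a ≠ c) (hbc : b ≠ c)
    (h : 10^a + 10^b + 10^c = 10^x + 10^y + 10^z) :
    ({a, b, c} : Finset ℕ) = {x, y, z} := by
  have semi : ∀ p q r : ℕ, p < q → q < r → 10^p + 10^q + 10^r = 10^x + 10^y + 10^z →
      ({p, q, r} : Finset ℕ) = {x, y, z} := by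
    intro p q r hpq hqr hs
    rcases le_total x y with h1 | h1 <;> rcases le_total y z with h2 | h2 <;>
      rcases le_total x z with h3 | h3
    · obtain ⟨e1, e2, e3⟩ := key_sorted p q r x y z hpq hqr h1 h2 (by linarith)
      subst e1; subst e2; subst e3; rfl
    · obtain ⟨e1, e2, e3⟩ := key_sorted p q r x y z hpq hqr h1 h2 (by linarith)
      subst e1; subst e2; subst e3; rfl
    · obtain ⟨e1, e2, e3⟩ := key_sorted p q r x z y hpq hqr h3 h2 (by linarith)
      subst e1; subst e2; subst e3; ext t; simp; tauto
    · obtain ⟨e1, e2, e3⟩ := key_sorted p q r z x y hpq hqr h3 h1 (by linarith)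
      subst e1; subst e2; subst e3; ext t; simp; tauto
    · obtain ⟨e1, e2, e3⟩ := key_sorted p q r y x z hpq hqr h1 h3 (by linarith)
      subst e1; subst e2; subst e3; ext t; simp; tauto
    · obtain ⟨e1, e2, e3⟩ := key_sorted p q r y z x hpq hqr h2 h3 (by linarith)
      subst e1; subst e2; subst e3; ext t; simp; tauto
    · obtain ⟨e1, e2, e3⟩ := key_sorted p q r z y x hpq hqr h2 h1 (by linarith)
      subst e1; subst e2; subst e3; ext t; simp; tauto
    · obtain ⟨e1, e2, e3⟩ := key_sorted p q r z y x hpq hqr h2 h1 (by linarith)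
      subst e1; subst e2; subst e3; ext t; simp; tauto
  rcases lt_or_gt_of_ne hab with h1 | h1 <;> rcases lt_or_gt_of_ne hac with h2 | h2 <;>
    rcases lt_or_gt_of_ne hbc with h3 | h3
  · exact semi a b c h1 h3 h
  · have := semi a c b h2 h3 (by linarith); rw [← this]; ext t; simp; tauto
  · omega
  · have := semi c a b h2 h1 (by linarith); rw [← this]; ext t; simp; tauto
  · have := semi b a c h1 h2 (by linarith); rw [← this]; ext t; simp; tauto
  · omega
  · have := semi b c a h3 h2 (by linarith); rw [← this]; ext t; simp; tauto
  · have := semi c b a h3 h1 (by linarith); rw [← this]; ext t; simp; tauto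

/-- If 4 item vectors (element-items or set-items with distinct indices) fit in
the budget `(E, 4Q - E)`, then their first coordinates sum to exactly `E`, exactly one of them
is a set-item, the other three are element-items with indices `i, j, k`, and the set-item's
index set is exactly `{i, j, k}`. -/
theorem stmt_6 (n : ℕ) (hn : 1 ≤ n) (E Q : ℤ)
    (hE : E = 10 * ∑ i ∈ Finset.Icc 1 n, (10 : ℤ)^i) (hQ : Q = 10 * E)
    (v : Fin 4 → ℤ × ℤ)
    (hv : ∀ t, (∃ i ∈ Finset.Icc 1 n, v t = ((10 : ℤ)^i, Q - 10^i)) ∨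
      (∃ a ∈ Finset.Icc 1 n, ∃ b ∈ Finset.Icc 1 n, ∃ c ∈ Finset.Icc 1 n,
        a ≠ b ∧ a ≠ c ∧ b ≠ c ∧
        v t = (E - 10^a - 10^b - 10^c, Q - E + 10^a + 10^b + 10^c)))
    (hsum1 : ∑ t, (v t).1 ≤ E) (hsum2 : ∑ t, (v t).2 ≤ 4 * Q - E) :
    (∑ t, (v t).1 = E) ∧
    ∃ t₀ : Fin 4, ∃ a b c : ℕ,
      a ∈ Finset.Icc 1 n ∧ b ∈ Finset.Icc 1 n ∧ c ∈ Finset.Icc 1 n ∧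
      a ≠ b ∧ a ≠ c ∧ b ≠ c ∧
      v t₀ = (E - 10^a - 10^b - 10^c, Q - E + 10^a + 10^b + 10^c) ∧
      ∃ e : Fin 4 → ℕ,
        (∀ t, t ≠ t₀ → e t ∈ Finset.Icc 1 n ∧ v t = ((10 : ℤ)^(e t), Q - 10^(e t))) ∧
        ({a, b, c} : Finset ℕ) = (Finset.univ.erase t₀).image e := by
  have hpos : (0:ℤ) < 10^n := by positivity
  have hEbig : (10:ℤ)^n * 10 ≤ E := by
    rw [hE]
    have h1 : (10:ℤ)^n ≤ ∑ i ∈ Finset.Icc 1 n, (10:ℤ)^i :=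
      Finset.single_le_sum (f := fun i => (10:ℤ)^i) (fun i _ => by positivity)
        (Finset.mem_Icc.mpr ⟨hn, le_refl n⟩)
    linarith
  have hbound : ∀ i ∈ Finset.Icc 1 n, (10:ℤ) ≤ 10^i ∧ (10:ℤ)^i ≤ 10^n := by
    intro i hi
    rw [Finset.mem_Icc] at hi
    constructor
    · calc (10:ℤ) = 10^1 := (pow_one 10).symm
        _ ≤ 10^i := pow_le_pow_right₀ (by norm_num) hi.1
    · exact pow_le_pow_right₀ (by norm_num) hi.2
  have hlow : ∀ t, (10:ℤ) ≤ (v t).1 := by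
    intro t
    rcases hv t with ⟨i, hi, h⟩ | ⟨a, ha, b, hb, c, hc, _, _, _, h⟩
    · have e1 : (v t).1 = 10^i := by rw [h]
      rw [e1]; exact (hbound i hi).1
    · have e1 : (v t).1 = E - 10^a - 10^b - 10^c := by rw [h]
      rw [e1]
      linarith [(hbound a ha).2, (hbound b hb).2, (hbound c hc).2,
        (hbound n (Finset.mem_Icc.mpr ⟨hn, le_refl n⟩)).1]
  have hpair : ∀ t, (v t).1 + (v t).2 = Q := by
    intro t
    rcases hv t with ⟨i, hi, h⟩ | ⟨a, ha, b, hb, c, hc, _, _, _, h⟩ <;> rw [h] <;> dsimp only <;> ring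
  have hsum_eq : ∑ t, (v t).1 = E := by
    have h4Q : (∑ t, (v t).1) + ∑ t, (v t).2 = 4 * Q := by
      rw [← Finset.sum_add_distrib]
      rw [Finset.sum_congr rfl (fun t _ => hpair t)]
      simp [Finset.card_univ]
    linarith
  refine ⟨hsum_eq, ?_⟩
  have hs' : (v 0).1 + (v 1).1 + (v 2).1 + (v 3).1 = E := by
    rw [← hsum_eq, Fin.sum_univ_four]
  rcases hv 0 with ⟨i0, hi0, h0⟩ | ⟨a0, ha0, b0, hb0, c0, hc0, hab0, hac0, hbc0, h0⟩ <;>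
    rcases hv 1 with ⟨i1, hi1, h1⟩ | ⟨a1, ha1, b1, hb1, c1, hc1, hab1, hac1, hbc1, h1⟩ <;>
    rcases hv 2 with ⟨i2, hi2, h2⟩ | ⟨a2, ha2, b2, hb2, c2, hc2, hab2, hac2, hbc2, h2⟩ <;>
    rcases hv 3 with ⟨i3, hi3, h3⟩ | ⟨a3, ha3, b3, hb3, c3, hc3, hab3, hac3, hbc3, h3⟩
  all_goals first
  | (exfalso
     have ep : (v 0).1 = E - 10^a0 - 10^b0 - 10^c0 := by rw [h0]
     have eq' : (v 1).1 = E - 10^a1 - 10^b1 - 10^c1 := by rw [h1]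
     linarith [hlow 2, hlow 3,
       (hbound a0 ha0).2, (hbound b0 hb0).2, (hbound c0 hc0).2,
       (hbound a1 ha1).2, (hbound b1 hb1).2, (hbound c1 hc1).2])
  | (exfalso
     have ep : (v 0).1 = E - 10^a0 - 10^b0 - 10^c0 := by rw [h0]
     have eq' : (v 2).1 = E - 10^a2 - 10^b2 - 10^c2 := by rw [h2]
     linarith [hlow 1, hlow 3,
       (hbound a0 ha0).2, (hbound b0 hb0).2, (hbound c0 hc0).2,
       (hbound a2 ha2).2, (hbound b2 hb2).2, (hbound c2 hc2).2])
  | (exfalso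
     have ep : (v 0).1 = E - 10^a0 - 10^b0 - 10^c0 := by rw [h0]
     have eq' : (v 3).1 = E - 10^a3 - 10^b3 - 10^c3 := by rw [h3]
     linarith [hlow 1, hlow 2,
       (hbound a0 ha0).2, (hbound b0 hb0).2, (hbound c0 hc0).2,
       (hbound a3 ha3).2, (hbound b3 hb3).2, (hbound c3 hc3).2])
  | (exfalso
     have ep : (v 1).1 = E - 10^a1 - 10^b1 - 10^c1 := by rw [h1]
     have eq' : (v 2).1 = E - 10^a2 - 10^b2 - 10^c2 := by rw [h2]
     linarith [hlow 0, hlow 3,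
       (hbound a1 ha1).2, (hbound b1 hb1).2, (hbound c1 hc1).2,
       (hbound a2 ha2).2, (hbound b2 hb2).2, (hbound c2 hc2).2])
  | (exfalso
     have ep : (v 1).1 = E - 10^a1 - 10^b1 - 10^c1 := by rw [h1]
     have eq' : (v 3).1 = E - 10^a3 - 10^b3 - 10^c3 := by rw [h3]
     linarith [hlow 0, hlow 2,
       (hbound a1 ha1).2, (hbound b1 hb1).2, (hbound c1 hc1).2,
       (hbound a3 ha3).2, (hbound b3 hb3).2, (hbound c3 hc3).2])
  | (exfalso
     have ep : (v 2).1 = E - 10^a2 - 10^b2 - 10^c2 := by rw [h2]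
     have eq' : (v 3).1 = E - 10^a3 - 10^b3 - 10^c3 := by rw [h3]
     linarith [hlow 0, hlow 1,
       (hbound a2 ha2).2, (hbound b2 hb2).2, (hbound c2 hc2).2,
       (hbound a3 ha3).2, (hbound b3 hb3).2, (hbound c3 hc3).2])
  | (exfalso
     have e0 : (v 0).1 = 10^i0 := by rw [h0]
     have e1 : (v 1).1 = 10^i1 := by rw [h1]
     have e2 : (v 2).1 = 10^i2 := by rw [h2]
     have e3 : (v 3).1 = 10^i3 := by rw [h3]
     linarith [(hbound i0 hi0).2, (hbound i1 hi1).2, (hbound i2 hi2).2, (hbound i3 hi3).2])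
  | (have ep : (v 0).1 = E - 10^a0 - 10^b0 - 10^c0 := by rw [h0]
     have eq1 : (v 1).1 = 10^i1 := by rw [h1]
     have eq2 : (v 2).1 = 10^i2 := by rw [h2]
     have eq3 : (v 3).1 = 10^i3 := by rw [h3]
     have heq : (10:ℤ)^a0 + 10^b0 + 10^c0 = 10^i1 + 10^i2 + 10^i3 := by linarith
     have heqn : 10^a0 + 10^b0 + 10^c0 = 10^i1 + 10^i2 + 10^i3 := by exact_mod_cast heq
     have hset := key3 a0 b0 c0 i1 i2 i3 hab0 hac0 hbc0 heqn
     have hforall : ∀ s : Fin 4, s ≠ (0:Fin 4) → (![i1, i1, i2, i3] : Fin 4 → ℕ) s ∈ Finset.Icc 1 n ∧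
         v s = ((10:ℤ)^((![i1, i1, i2, i3] : Fin 4 → ℕ) s), Q - 10^((![i1, i1, i2, i3] : Fin 4 → ℕ) s)) := by
       intro s hs
       fin_cases s <;>
         first
         | exact absurd rfl hs
         | exact ⟨hi1, h1⟩
         | exact ⟨hi2, h2⟩
         | exact ⟨hi3, h3⟩
     have him : ({a0, b0, c0} : Finset ℕ) = (Finset.univ.erase (0:Fin 4)).image ![i1, i1, i2, i3] := by
       rw [show (Finset.univ.erase (0 : Fin 4)) = {1, 2, 3} from by decide]
       simpa using hset
     exact ⟨0, a0, b0, c0, ha0, hb0, hc0, hab0, hac0, hbc0, h0, ![i1, i1, i2, i3], hforall, him⟩)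
  | (have ep : (v 1).1 = E - 10^a1 - 10^b1 - 10^c1 := by rw [h1]
     have eq1 : (v 0).1 = 10^i0 := by rw [h0]
     have eq2 : (v 2).1 = 10^i2 := by rw [h2]
     have eq3 : (v 3).1 = 10^i3 := by rw [h3]
     have heq : (10:ℤ)^a1 + 10^b1 + 10^c1 = 10^i0 + 10^i2 + 10^i3 := by linarith
     have heqn : 10^a1 + 10^b1 + 10^c1 = 10^i0 + 10^i2 + 10^i3 := by exact_mod_cast heq
     have hset := key3 a1 b1 c1 i0 i2 i3 hab1 hac1 hbc1 heqn
     have hforall : ∀ s : Fin 4, s ≠ (1:Fin 4) → (![i0, i0, i2, i3] : Fin 4 → ℕ) s ∈ Finset.Icc 1 n ∧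
         v s = ((10:ℤ)^((![i0, i0, i2, i3] : Fin 4 → ℕ) s), Q - 10^((![i0, i0, i2, i3] : Fin 4 → ℕ) s)) := by
       intro s hs
       fin_cases s <;>
         first
         | exact absurd rfl hs
         | exact ⟨hi0, h0⟩
         | exact ⟨hi2, h2⟩
         | exact ⟨hi3, h3⟩
     have him : ({a1, b1, c1} : Finset ℕ) = (Finset.univ.erase (1:Fin 4)).image ![i0, i0, i2, i3] := by
       rw [show (Finset.univ.erase (1 : Fin 4)) = {0, 2, 3} from by decide]
       simpa using hset
     exact ⟨1, a1, b1, c1, ha1, hb1, hc1, hab1, hac1, hbc1, h1, ![i0, i0, i2, i3], hforall, him⟩)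
  | (have ep : (v 2).1 = E - 10^a2 - 10^b2 - 10^c2 := by rw [h2]
     have eq1 : (v 0).1 = 10^i0 := by rw [h0]
     have eq2 : (v 1).1 = 10^i1 := by rw [h1]
     have eq3 : (v 3).1 = 10^i3 := by rw [h3]
     have heq : (10:ℤ)^a2 + 10^b2 + 10^c2 = 10^i0 + 10^i1 + 10^i3 := by linarith
     have heqn : 10^a2 + 10^b2 + 10^c2 = 10^i0 + 10^i1 + 10^i3 := by exact_mod_cast heq
     have hset := key3 a2 b2 c2 i0 i1 i3 hab2 hac2 hbc2 heqn
     have hforall : ∀ s : Fin 4, s ≠ (2:Fin 4) → (![i0, i1, i0, i3] : Fin 4 → ℕ) s ∈ Finset.Icc 1 n ∧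
         v s = ((10:ℤ)^((![i0, i1, i0, i3] : Fin 4 → ℕ) s), Q - 10^((![i0, i1, i0, i3] : Fin 4 → ℕ) s)) := by
       intro s hs
       fin_cases s <;>
         first
         | exact absurd rfl hs
         | exact ⟨hi0, h0⟩
         | exact ⟨hi1, h1⟩
         | exact ⟨hi3, h3⟩
     have him : ({a2, b2, c2} : Finset ℕ) = (Finset.univ.erase (2:Fin 4)).image ![i0, i1, i0, i3] := by
       rw [show (Finset.univ.erase (2 : Fin 4)) = {0, 1, 3} from by decide]
       simpa using hset
     exact ⟨2, a2, b2, c2, ha2, hb2, hc2, hab2, hac2, hbc2, h2, ![i0, i1, i0, i3], hforall, him⟩)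
  | (have ep : (v 3).1 = E - 10^a3 - 10^b3 - 10^c3 := by rw [h3]
     have eq1 : (v 0).1 = 10^i0 := by rw [h0]
     have eq2 : (v 1).1 = 10^i1 := by rw [h1]
     have eq3 : (v 2).1 = 10^i2 := by rw [h2]
     have heq : (10:ℤ)^a3 + 10^b3 + 10^c3 = 10^i0 + 10^i1 + 10^i2 := by linarith
     have heqn : 10^a3 + 10^b3 + 10^c3 = 10^i0 + 10^i1 + 10^i2 := by exact_mod_cast heq
     have hset := key3 a3 b3 c3 i0 i1 i2 hab3 hac3 hbc3 heqn
     have hforall : ∀ s : Fin 4, s ≠ (3:Fin 4) → (![i0, i1, i2, i0] : Fin 4 → ℕ) s ∈ Finset.Icc 1 n ∧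
         v s = ((10:ℤ)^((![i0, i1, i2, i0] : Fin 4 → ℕ) s), Q - 10^((![i0, i1, i2, i0] : Fin 4 → ℕ) s)) := by
       intro s hs
       fin_cases s <;>
         first
         | exact absurd rfl hs
         | exact ⟨hi0, h0⟩
         | exact ⟨hi1, h1⟩
         | exact ⟨hi2, h2⟩
     have him : ({a3, b3, c3} : Finset ℕ) = (Finset.univ.erase (3:Fin 4)).image ![i0, i1, i2, i0] := by
       rw [show (Finset.univ.erase (3 : Fin 4)) = {0, 1, 2} from by decide]
       simpa using hset
     exact ⟨3, a3, b3, c3, ha3, hb3, hc3, hab3, hac3, hbc3, h3, ![i0, i1, i2, i0], hforall, him⟩)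
end

section
/- Let 0 < δ ≤ 1, s ≥ 1, and let B_1, ..., B_n ∈ [0,1]^s be weight vectors. Define rounded vectors B̃_j as follows: if ‖B_j‖_∞ ≤ δ then B̃_j = B_j; otherwise B̃_j[1] = B_j[1], and for 2 ≤ i ≤ s, B̃_j[i] is B_j[i] rounded up to the smallest value of the form (δ²/s)(1+δ)^h with integer h ≥ 0 that is at least max(B_j[i], δ²/s). Then for every y ∈ [0,1]^n with Σ_j B_j y_j ≤ 1 coordinatewise: Σ_j B̃_j[1] y_j ≤ 1, and for each 2 ≤ i ≤ s, Σ_j B̃_j[i] y_j ≤ 1 + 2δ. -/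
/-- Rounding up the non-principal coordinates of large-weight items to powers of
`(1+δ)` times `δ²/s` preserves feasibility up to `1 + 2δ` in the non-principal coordinates. -/
theorem stmt_8 (n s : ℕ) (hs : 0 < s) (δ : ℝ) (hδ0 : 0 < δ) (hδ1 : δ ≤ 1)
    (B Bt : Fin n → Fin s → ℝ)
    (hB0 : ∀ j i, 0 ≤ B j i) (hB1 : ∀ j i, B j i ≤ 1)
    (hsmall : ∀ j, (∀ i, B j i ≤ δ) → Bt j = B j)
    (hlarge : ∀ j, ¬ (∀ i, B j i ≤ δ) →
      Bt j ⟨0, hs⟩ = B j ⟨0, hs⟩ ∧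
      ∀ i : Fin s, (i : ℕ) ≠ 0 →
        (∃ h : ℕ, Bt j i = (δ^2 / s) * (1+δ)^h) ∧
        max (B j i) (δ^2 / s) ≤ Bt j i ∧
        (∀ h : ℕ, max (B j i) (δ^2 / s) ≤ (δ^2 / s) * (1+δ)^h →
          Bt j i ≤ (δ^2 / s) * (1+δ)^h)) :
    ∀ y : Fin n → ℝ, (∀ j, 0 ≤ y j) → (∀ j, y j ≤ 1) →
      (∀ i, ∑ j, B j i * y j ≤ 1) →
      (∑ j, Bt j ⟨0, hs⟩ * y j ≤ 1) ∧
      (∀ i : Fin s, (i : ℕ) ≠ 0 → ∑ j, Bt j i * y j ≤ 1 + 2*δ) := by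
  intro y hy0 hy1 hfeas
  classical
  have hs' : (0:ℝ) < s := by exact_mod_cast hs
  have hδs : (0:ℝ) < δ^2 / s := by positivity
  constructor
  · have heq : ∀ j, Bt j ⟨0, hs⟩ = B j ⟨0, hs⟩ := by
      intro j
      by_cases h : ∀ i, B j i ≤ δ
      · rw [hsmall j h]
      · exact (hlarge j h).1
    calc ∑ j, Bt j ⟨0, hs⟩ * y j = ∑ j, B j ⟨0, hs⟩ * y j := by
          simp only [heq]
      _ ≤ 1 := hfeas _
  · intro i hi
    set L : Finset (Fin n) := Finset.univ.filter (fun j => ¬ ∀ i, B j i ≤ δ) with hL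
    have hmass : δ * ∑ j ∈ L, y j ≤ s := by
      have h1 : ∀ j ∈ L, δ * y j ≤ ∑ i, B j i * y j := by
        intro j hj
        have hj' : ¬ ∀ i, B j i ≤ δ := (Finset.mem_filter.mp hj).2
        push_neg at hj'
        obtain ⟨i₀, hi₀⟩ := hj'
        have h2 : δ * y j ≤ B j i₀ * y j :=
          mul_le_mul_of_nonneg_right hi₀.le (hy0 j)
        exact h2.trans (Finset.single_le_sum
          (fun i _ => mul_nonneg (hB0 j i) (hy0 j)) (Finset.mem_univ i₀))
      calc δ * ∑ j ∈ L, y j = ∑ j ∈ L, δ * y j := Finset.mul_sum _ _ _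
        _ ≤ ∑ j ∈ L, ∑ i, B j i * y j := Finset.sum_le_sum h1
        _ ≤ ∑ j, ∑ i, B j i * y j :=
            Finset.sum_le_sum_of_subset_of_nonneg (Finset.filter_subset _ _)
              (fun j _ _ => Finset.sum_nonneg fun i _ => mul_nonneg (hB0 j i) (hy0 j))
        _ = ∑ i, ∑ j, B j i * y j := Finset.sum_comm
        _ ≤ ∑ _i : Fin s, 1 := Finset.sum_le_sum (fun i _ => hfeas i)
        _ = s := by simp
    have hpt : ∀ j, Bt j i * y j ≤ (1+δ) * B j i * y j +
        (if j ∈ L then (δ^2/s) * y j else 0) := by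
      intro j
      by_cases h : ∀ i, B j i ≤ δ
      · have hjL : j ∉ L := by simp [hL, h]
        rw [if_neg hjL, hsmall j h, add_zero]
        have hB : B j i ≤ (1+δ) * B j i := by nlinarith [hB0 j i]
        calc B j i * y j ≤ ((1+δ) * B j i) * y j :=
              mul_le_mul_of_nonneg_right hB (hy0 j)
          _ = (1+δ) * B j i * y j := by ring
      · have hjL : j ∈ L := Finset.mem_filter.mpr ⟨Finset.mem_univ j, h⟩
        rw [if_pos hjL]
        obtain ⟨_, _, hmin⟩ := (hlarge j h).2 i hi
        have key : Bt j i ≤ (1+δ) * B j i + δ^2/s := by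
          by_cases hcase : B j i ≤ δ^2 / s
          · have h0 : max (B j i) (δ^2/s) ≤ (δ^2/s) * (1+δ)^0 := by
              simp [max_le_iff, hcase]
            have := hmin 0 h0
            simp at this
            nlinarith [hB0 j i]
          · push_neg at hcase
            have hone : (1:ℝ) < 1 + δ := by linarith
            obtain ⟨m, hm⟩ := pow_unbounded_of_one_lt (B j i / (δ^2/s)) hone
            have hex2 : ∃ m, B j i ≤ (δ^2/s) * (1+δ)^m := by
              refine ⟨m, ?_⟩
              rw [div_lt_iff₀ hδs] at hm
              nlinarith
            set m₀ := Nat.find hex2 with hm₀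
            have hspec : B j i ≤ (δ^2/s) * (1+δ)^m₀ := Nat.find_spec hex2
            have hm₀ne : m₀ ≠ 0 := by
              intro h0
              have := hspec
              rw [h0] at this
              simp at this
              linarith
            obtain ⟨k, hk⟩ := Nat.exists_eq_succ_of_ne_zero hm₀ne
            have hlt : ¬ B j i ≤ (δ^2/s) * (1+δ)^k :=
              Nat.find_min hex2 (by omega)
            push_neg at hlt
            have hmaxle : max (B j i) (δ^2/s) ≤ (δ^2/s) * (1+δ)^m₀ := by
              refine max_le hspec ?_
              have hpow : (1:ℝ) ≤ (1+δ)^m₀ := one_le_pow₀ hone.le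
              nlinarith
            have hbt := hmin m₀ hmaxle
            have h3 : (δ^2/↑s * (1+δ)^k) * (1+δ) ≤ B j i * (1+δ) :=
              mul_le_mul_of_nonneg_right hlt.le (by linarith)
            have : (δ^2/(s:ℝ)) * (1+δ)^m₀ ≤ (1+δ) * B j i := by
              have hps : (1+δ)^m₀ = (1+δ)^k * (1+δ) := by rw [hk, pow_succ]
              rw [hps, ← mul_assoc]
              nlinarith
            nlinarith
        calc Bt j i * y j ≤ ((1+δ) * B j i + δ^2/s) * y j :=
              mul_le_mul_of_nonneg_right key (hy0 j)
          _ = (1+δ) * B j i * y j + (δ^2/s) * y j := by ring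
    calc ∑ j, Bt j i * y j
        ≤ ∑ j, ((1+δ) * B j i * y j + (if j ∈ L then (δ^2/s) * y j else 0)) :=
          Finset.sum_le_sum (fun j _ => hpt j)
      _ = (1+δ) * ∑ j, B j i * y j + (δ^2/s) * ∑ j ∈ L, y j := by
          have hif : ∑ x : Fin n, (if x ∈ L then (δ^2/(s:ℝ)) * y x else 0)
              = ∑ x ∈ L, (δ^2/(s:ℝ)) * y x := by
            rw [Finset.sum_ite_mem, Finset.univ_inter]
          rw [Finset.sum_add_distrib, hif, ← Finset.mul_sum]
          congr 1
          rw [Finset.mul_sum]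
          exact Finset.sum_congr rfl fun x _ => (mul_assoc _ _ _)
      _ ≤ (1+δ) * 1 + (δ^2/s) * ∑ j ∈ L, y j := by
          have := hfeas i
          have hnn : (0:ℝ) ≤ 1 + δ := by linarith
          nlinarith
      _ ≤ 1 + 2*δ := by
          have h2 : (δ^2/s) * ∑ j ∈ L, y j ≤ δ := by
            have : (δ/s) * (δ * ∑ j ∈ L, y j) ≤ (δ/s) * s :=
              mul_le_mul_of_nonneg_left hmass (by positivity)
            calc (δ^2/s) * ∑ j ∈ L, y j = (δ/s) * (δ * ∑ j ∈ L, y j) := by ring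
              _ ≤ (δ/s) * s := this
              _ = δ := by field_simp
          linarith
end
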